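/- Let (Ω, F, P) be a probability space, Y : Ω → ℝ integrable, and A ∈ F an event with P(A) = c > 0. Then for every q ∈ ℝ and q′ ∈ ℝ: (1/c)·∫_A Y dP ≤ ∫ Y dP + (1/c)·∫ ρ_{1−c}(Y, q) dP, and (1/c)·∫_A Y dP ≥ ∫ Y dP − (1/c)·∫ ρ_c(Y, q′) dP. -/

import Mathlib

open MeasureTheory

/-- The check function ρ_t(y, q) = t·max(y − q, 0) + (1 − t)·max(q − y, 0). -/
noncomputable def check (t y q : ℝ) : ℝ := t * max (y - q) 0 + (1 - t) * max (q - y) 0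

theorem conditional_mean_bounds
    {Ω : Type*} [MeasurableSpace Ω] (P : Measure Ω) [IsProbabilityMeasure P]
    (Y : Ω → ℝ) (hY : Integrable Y P)
    (A : Set Ω) (hA : MeasurableSet A) (c : ℝ) (hc : 0 < c) (hPA : (P A).toReal = c)
    (q q' : ℝ) :
    (1 / c) * ∫ ω in A, Y ω ∂P ≤ (∫ ω, Y ω ∂P) + (1 / c) * ∫ ω, check (1 - c) (Y ω) q ∂P ∧
      (∫ ω, Y ω ∂P) - (1 / c) * ∫ ω, check c (Y ω) q' ∂P ≤ (1 / c) * ∫ ω in A, Y ω ∂P := by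
  have hmax : ∀ a : ℝ, max a 0 - max (-a) 0 = a := by
    intro a
    rcases le_total a 0 with h | h
    · simp [max_eq_right h, max_eq_left (neg_nonneg.2 h)]
    · simp [max_eq_left h, max_eq_right (neg_nonpos.2 h)]
  have key : ∀ r : ℝ,
      (∫ ω in A, Y ω ∂P ≤ c * ∫ ω, Y ω ∂P + ∫ ω, check (1 - c) (Y ω) r ∂P) ∧
      (c * ∫ ω, Y ω ∂P - ∫ ω, check c (Y ω) r ∂P ≤ ∫ ω in A, Y ω ∂P) := by
    intro r
    set fp : Ω → ℝ := fun ω => max (Y ω - r) 0 with hfp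
    set fm : Ω → ℝ := fun ω => max (r - Y ω) 0 with hfm
    have hsub : Integrable (fun ω => Y ω - r) P := hY.sub (integrable_const r)
    have hp : Integrable fp P := hsub.pos_part
    have hm : Integrable fm P := ((integrable_const r).sub hY).pos_part
    have hIp : ∫ ω in A, fp ω ∂P ≤ ∫ ω, fp ω ∂P :=
      setIntegral_le_integral hp (Filter.Eventually.of_forall fun ω => le_max_right _ _)
    have hIm : ∫ ω in A, fm ω ∂P ≤ ∫ ω, fm ω ∂P :=
      setIntegral_le_integral hm (Filter.Eventually.of_forall fun ω => le_max_right _ _)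
    have hA1 : ∫ ω in A, (Y ω - r) ∂P = ∫ ω in A, Y ω ∂P - c * r := by
      rw [integral_sub hY.integrableOn (integrable_const r).integrableOn,
        setIntegral_const, measureReal_def, hPA, smul_eq_mul]
    have hA2 : ∫ ω in A, (Y ω - r) ∂P ≤ ∫ ω in A, fp ω ∂P :=
      setIntegral_mono hsub.integrableOn hp.integrableOn fun ω => le_max_left _ _
    have hA3 : -∫ ω in A, fm ω ∂P ≤ ∫ ω in A, (Y ω - r) ∂P := by
      have h := setIntegral_mono (s := A) (g := fun ω => Y ω - r)
        hm.neg.integrableOn hsub.integrableOn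
        (fun ω => by
          have := le_max_left (r - Y ω) (0 : ℝ)
          simp only [Pi.neg_apply, hfm]
          linarith)
      simp only [Pi.neg_apply] at h
      rw [integral_neg] at h
      exact h
    have hE : ∫ ω, (Y ω - r) ∂P = ∫ ω, Y ω ∂P - r := by
      rw [integral_sub hY (integrable_const r)]
      simp
    have hdecomp : ∫ ω, (Y ω - r) ∂P = ∫ ω, fp ω ∂P - ∫ ω, fm ω ∂P := by
      rw [← integral_sub hp hm]
      refine integral_congr_ae (Filter.Eventually.of_forall fun ω => ?_)
      have := hmax (Y ω - r)
      simp only [hfp, hfm, neg_sub] at *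
      linarith
    have hcheck1 : ∫ ω, check (1 - c) (Y ω) r ∂P
        = (1 - c) * ∫ ω, fp ω ∂P + c * ∫ ω, fm ω ∂P := by
      simp only [check]
      rw [integral_add (hp.const_mul _) (hm.const_mul _), integral_const_mul,
        integral_const_mul, show (1 : ℝ) - (1 - c) = c from by ring]
    have hcheck2 : ∫ ω, check c (Y ω) r ∂P
        = c * ∫ ω, fp ω ∂P + (1 - c) * ∫ ω, fm ω ∂P := by
      simp only [check]
      rw [integral_add (hp.const_mul _) (hm.const_mul _), integral_const_mul,
        integral_const_mul]
    constructor
    · nlinarith [hIp, hA1, hA2, hE, hdecomp, hcheck1]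
    · nlinarith [hIm, hA1, hA3, hE, hdecomp, hcheck2]
  have hcne : c ≠ 0 := ne_of_gt hc
  have hcinv : (0 : ℝ) ≤ 1 / c := le_of_lt (one_div_pos.2 hc)
  constructor
  · have h1 := (key q).1
    have h := mul_le_mul_of_nonneg_left h1 hcinv
    have heq : (1 / c) * (c * (∫ ω, Y ω ∂P) + ∫ ω, check (1 - c) (Y ω) q ∂P)
        = (∫ ω, Y ω ∂P) + (1 / c) * ∫ ω, check (1 - c) (Y ω) q ∂P := by
      field_simp
    linarith
  · have h2 := (key q').2
    have h := mul_le_mul_of_nonneg_left h2 hcinv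
    have heq : (1 / c) * (c * (∫ ω, Y ω ∂P) - ∫ ω, check c (Y ω) q' ∂P)
        = (∫ ω, Y ω ∂P) - (1 / c) * ∫ ω, check c (Y ω) q' ∂P := by
      field_simp
    linarith
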